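/- Let u be a vertex of degree 1 in a connected graph G with at least 3 vertices, and let v be the unique neighbor of u. If M is a MEG-set of G, then M \ {v} is also a MEG-set of G. -/

import Mathlib

open SimpleGraph

/-- A pair `{x, y}` monitors the edge `e` if `e` lies on every shortest path
between `x` and `y` in `G`. -/
def Monitors {V : Type*} (G : SimpleGraph V) (x y : V) (e : Sym2 V) : Prop :=
  ∀ p : G.Walk x y, p.IsPath → p.length = G.dist x y → e ∈ p.edges

/-- `M` is a monitoring edge-geodetic set of `G` if every edge of `G` is
monitored by some pair of vertices of `M`. -/
def IsMEGSet {V : Type*} (G : SimpleGraph V) (M : Set V) : Prop :=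
  ∀ e ∈ G.edgeSet, ∃ x ∈ M, ∃ y ∈ M, Monitors G x y e

section Aux

variable {V : Type*} {G : SimpleGraph V} {u v : V}

lemma monitors_symm {x y : V} {e : Sym2 V} (h : Monitors G x y e) :
    Monitors G y x e := by
  intro p hp hlen
  have := h p.reverse hp.reverse (by
    rw [SimpleGraph.Walk.length_reverse, hlen, SimpleGraph.dist_comm])
  rwa [SimpleGraph.Walk.edges_reverse, List.mem_reverse] at this

lemma not_monitors_self {x : V} {e : Sym2 V} (h : Monitors G x x e) : False := by
  have := h SimpleGraph.Walk.nil SimpleGraph.Walk.IsPath.nil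
    (by simp [SimpleGraph.dist_self])
  simp at this

/-- Shift lemma: if `(v, y)` monitors `e` and `u` is a leaf attached to `v`,
then `(u, y)` monitors `e` (for `y ≠ u`). -/
lemma monitors_shift (hG : G.Connected) (huv : G.Adj u v)
    (hub : ∀ w, G.Adj u w → w = v) {y : V} (hy : y ≠ u) {e : Sym2 V}
    (h : Monitors G v y e) : Monitors G u y e := by
  intro p hp hlen
  obtain ⟨w, hadj, q, rfl⟩ := SimpleGraph.Walk.exists_eq_cons_of_ne (Ne.symm hy) p
  obtain rfl : v = w := (hub _ hadj).symm
  have hq : q.IsPath := hp.of_cons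
  have h1 : G.dist u y ≤ G.dist u v + G.dist v y := hG.dist_triangle
  have h2 : G.dist u v = 1 := SimpleGraph.dist_eq_one_iff_adj.mpr huv
  have h3 : G.dist v y ≤ q.length := SimpleGraph.dist_le q
  rw [SimpleGraph.Walk.length_cons] at hlen
  have hqlen : q.length = G.dist v y := by omega
  have := h q hq hqlen
  rw [SimpleGraph.Walk.edges_cons]
  exact List.mem_cons_of_mem _ this

/-- Any pair `(u, z)` with `z ≠ u`, where `u` is a leaf with unique neighbor `v`,
monitors the edge `s(u,v)`. -/
lemma monitors_leaf_edge (hub : ∀ w, G.Adj u w → w = v) {z : V} (hz : z ≠ u) :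
    Monitors G u z s(u, v) := by
  intro p hp hlen
  obtain ⟨w, hadj, q, rfl⟩ := SimpleGraph.Walk.exists_eq_cons_of_ne (Ne.symm hz) p
  obtain rfl : v = w := (hub _ hadj).symm
  rw [SimpleGraph.Walk.edges_cons]
  exact List.mem_cons_self

/-- If `(x, y)` monitors the leaf edge `s(u,v)` then `u ∈ {x, y}`. -/
lemma mem_of_monitors_leaf_edge (hG : G.Connected) (huv : G.Adj u v)
    (hub : ∀ w, G.Adj u w → w = v) {x y : V}
    (h : Monitors G x y s(u, v)) : x = u ∨ y = u := by
  classical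
  by_contra hc
  push_neg at hc
  obtain ⟨hx, hy⟩ := hc
  obtain ⟨p, hp, hlen⟩ := hG.exists_path_of_dist x y
  have he := h p hp hlen
  have hus : u ∈ p.support := p.fst_mem_support_of_mem_edges he
  have hspec := p.take_spec hus
  have hqp : (p.takeUntil u hus).IsPath := hp.takeUntil hus
  have hrp : (p.dropUntil u hus).IsPath := hp.dropUntil hus
  -- v ∈ (takeUntil).support
  have hvq : v ∈ (p.takeUntil u hus).support := by
    obtain ⟨w, hadj, t, heq⟩ :=
      SimpleGraph.Walk.exists_eq_cons_of_ne (Ne.symm hx) (p.takeUntil u hus).reverse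
    obtain rfl : v = w := (hub _ hadj).symm
    have : v ∈ (p.takeUntil u hus).reverse.support := by
      rw [heq, SimpleGraph.Walk.support_cons]
      exact List.mem_cons_of_mem _ t.start_mem_support
    rwa [SimpleGraph.Walk.support_reverse, List.mem_reverse] at this
  -- v ∈ (dropUntil).support.tail
  have hvr : v ∈ (p.dropUntil u hus).support.tail := by
    obtain ⟨w, hadj, t, heq⟩ :=
      SimpleGraph.Walk.exists_eq_cons_of_ne (Ne.symm hy) (p.dropUntil u hus)
    obtain rfl : v = w := (hub _ hadj).symm
    rw [heq, SimpleGraph.Walk.support_cons]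
    exact t.start_mem_support
  have hnodup : p.support.Nodup := hp.support_nodup
  rw [← hspec, SimpleGraph.Walk.support_append] at hnodup
  exact (List.nodup_append'.mp hnodup).2.2 hvq hvr

end Aux

theorem megSet_sdiff_support {V : Type*} [Fintype V] (G : SimpleGraph V)
    [DecidableRel G.Adj] (hG : G.Connected) (hn : 3 ≤ Fintype.card V)
    (u v : V) (hu : G.degree u = 1) (huv : G.Adj u v)
    (M : Set V) (hM : IsMEGSet G M) :
    IsMEGSet G (M \ {v}) := by
  classical
  have hune : u ≠ v := huv.ne
  have hub : ∀ w, G.Adj u w → w = v := by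
    have hcard : (G.neighborFinset u).card = 1 := hu
    obtain ⟨a, ha⟩ := Finset.card_eq_one.mp hcard
    have hv : v ∈ G.neighborFinset u := (SimpleGraph.mem_neighborFinset G u v).mpr huv
    intro w hw
    have hw' : w ∈ G.neighborFinset u := (SimpleGraph.mem_neighborFinset G u w).mpr hw
    rw [ha, Finset.mem_singleton] at hv hw'
    rw [hw', hv]
  -- u ∈ M
  have huM : u ∈ M := by
    obtain ⟨x, hx, y, hy, hmon⟩ := hM s(u, v) ((SimpleGraph.mem_edgeSet G).mpr huv)
    rcases mem_of_monitors_leaf_edge hG huv hub hmon with rfl | rfl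
    · exact hx
    · exact hy
  have huM' : u ∈ M \ {v} := ⟨huM, hune⟩
  -- existence of a neighbor w ≠ u of v
  have hw_ex : ∃ w, G.Adj v w ∧ w ≠ u := by
    have hz : ∃ z : V, z ≠ u ∧ z ≠ v := by
      by_contra hc
      push_neg at hc
      have hsub : (Finset.univ : Finset V) ⊆ {u, v} := by
        intro z _
        rcases eq_or_ne z u with rfl | hzu
        · simp
        · simp [hc z hzu]
      have := Finset.card_le_card hsub
      simp only [Finset.card_univ] at this
      have h2 : ({u, v} : Finset V).card ≤ 2 := Finset.card_insert_le _ _ |>.trans (by simp)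
      omega
    obtain ⟨z, hzu, hzv⟩ := hz
    obtain ⟨w0⟩ := hG.preconnected v z
    obtain ⟨p, hp⟩ := w0.toPath
    obtain ⟨w, hadj, t, heq⟩ := SimpleGraph.Walk.exists_eq_cons_of_ne (Ne.symm hzv) p
    rcases eq_or_ne w u with rfl | hwu
    · exfalso
      obtain ⟨w2, hadj2, t2, heq2⟩ := SimpleGraph.Walk.exists_eq_cons_of_ne (Ne.symm hzu) t
      obtain rfl : v = w2 := (hub _ hadj2).symm
      rw [heq, heq2] at hp
      have hnodup := hp.support_nodup
      simp only [SimpleGraph.Walk.support_cons, List.nodup_cons] at hnodup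
      exact hnodup.1 (List.mem_cons_of_mem _ t2.start_mem_support)
    · exact ⟨w, hadj, hwu⟩
  intro e he
  obtain ⟨x, hx, y, hy, hmon⟩ := hM e he
  -- helper: handle the case x = v
  have key : ∀ y ∈ M, Monitors G v y e → ∃ a ∈ M \ {v}, ∃ b ∈ M \ {v}, Monitors G a b e := by
    intro y hy hmon
    rcases eq_or_ne y v with rfl | hyv
    · exact absurd hmon (fun h => not_monitors_self h)
    rcases eq_or_ne y u with hyu | hyu
    · -- (v, u) monitors e, so e = s(u,v)
      rw [hyu] at hmon
      have hdist : G.dist v u = 1 := SimpleGraph.dist_eq_one_iff_adj.mpr huv.symm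
      have hpe := hmon (SimpleGraph.Walk.cons huv.symm SimpleGraph.Walk.nil)
        (by simp [huv.ne']) (by simp [hdist])
      simp only [SimpleGraph.Walk.edges_cons, SimpleGraph.Walk.edges_nil,
        List.mem_singleton] at hpe
      subst hpe
      -- need some z ∈ M \ {u, v}
      by_cases hz : ∃ z ∈ M, z ≠ u ∧ z ≠ v
      · obtain ⟨z, hzM, hzu, hzv⟩ := hz
        refine ⟨u, huM', z, ⟨hzM, hzv⟩, ?_⟩
        have := monitors_leaf_edge hub hzu
        rwa [Sym2.eq_swap] at this
      · -- M ⊆ {u, v}: contradiction via edge s(v,w)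
        exfalso
        push_neg at hz
        obtain ⟨w, hvw, hwu⟩ := hw_ex
        obtain ⟨a, haM, b, hbM, hab⟩ := hM s(v, w) ((SimpleGraph.mem_edgeSet G).mpr hvw)
        have hmem : ∀ c ∈ M, c = u ∨ c = v := by
          intro c hc
          by_contra hcc
          push_neg at hcc
          exact hcc.2 (hz c hc hcc.1)
        have contra : ∀ (h : Monitors G u v s(v, w)), False := by
          intro h
          have hdist' : G.dist u v = 1 := SimpleGraph.dist_eq_one_iff_adj.mpr huv
          have hpe' := h (SimpleGraph.Walk.cons huv SimpleGraph.Walk.nil)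
            (by simp [huv.ne]) (by simp [hdist'])
          simp only [SimpleGraph.Walk.edges_cons, SimpleGraph.Walk.edges_nil,
            List.mem_singleton] at hpe'
          rw [Sym2.eq_iff] at hpe'
          rcases hpe' with ⟨h1, _⟩ | ⟨_, h2⟩
          · exact hune h1.symm
          · exact hwu h2
        rcases hmem a haM with rfl | rfl <;> rcases hmem b hbM with rfl | rfl
        · exact not_monitors_self hab
        · exact contra hab
        · exact contra (monitors_symm hab)
        · exact not_monitors_self hab
    · exact ⟨u, huM', y, ⟨hy, hyv⟩, monitors_shift hG huv hub hyu hmon⟩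
  rcases eq_or_ne x v with rfl | hxv
  · exact key y hy hmon
  rcases eq_or_ne y v with rfl | hyv
  · exact key x hx (monitors_symm hmon)
  · exact ⟨x, ⟨hx, hxv⟩, y, ⟨hy, hyv⟩, hmon⟩
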